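/- The vector u_{−s−2} := F^{s+1}(u_s) in the tensor product model M is nonzero, satisfies H(u_{−s−2}) = (−s−2)·u_{−s−2} and E(u_{−s−2}) = 0, and all of its coefficients in the basis {v_i ⊗ w_k} are nonnegative integers, supported on pairs (i,k) with i + k = (n+s+2)/2. -/

import Mathlib

/-- The tensor product model `M` of `L_n ⊗ V_0`: finitely supported functions on
`{0,…,n} × ℕ`, with standard basis vectors `v_i ⊗ w_k`. -/
abbrev TM (n : ℕ) : Type := (Fin (n + 1) × ℕ) →₀ ℂ

/-- The basis vector `v_i ⊗ w_k` of `M`, with the convention that it is `0`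
whenever `i < 0`, `i > n` or `k < 0`. -/
noncomputable def bv (n : ℕ) (i k : ℤ) : TM n :=
  if h : 0 ≤ i ∧ i < (n : ℤ) + 1 ∧ 0 ≤ k then
    Finsupp.single (⟨i.toNat, by omega⟩, k.toNat) (1 : ℂ)
  else 0

/-- The coefficient of `v_i ⊗ w_k` in `u`, interpreted as `0` for out-of-range
indices. -/
noncomputable def cf (n : ℕ) (u : TM n) (i k : ℤ) : ℂ :=
  if h : 0 ≤ i ∧ i < (n : ℤ) + 1 ∧ 0 ≤ k then u (⟨i.toNat, by omega⟩, k.toNat) else 0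

/-- `F(v_i ⊗ w_k) = (i+1)·v_{i+1} ⊗ w_k + v_i ⊗ w_{k+1}`. -/
noncomputable def FM (n : ℕ) : Module.End ℂ (TM n) :=
  Finsupp.lsum ℂ fun p => LinearMap.toSpanSingleton ℂ (TM n)
    ((((p.1 : ℕ) : ℂ) + 1) • bv n (((p.1 : ℕ) : ℤ) + 1) ((p.2 : ℤ)) +
      bv n ((p.1 : ℕ) : ℤ) ((p.2 : ℤ) + 1))

/-- `E(v_i ⊗ w_k) = (n-i+1)·v_{i-1} ⊗ w_k - k(k-1)·v_i ⊗ w_{k-1}`. -/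
noncomputable def EM (n : ℕ) : Module.End ℂ (TM n) :=
  Finsupp.lsum ℂ fun p => LinearMap.toSpanSingleton ℂ (TM n)
    (((n : ℂ) - ((p.1 : ℕ) : ℂ) + 1) • bv n (((p.1 : ℕ) : ℤ) - 1) ((p.2 : ℤ)) -
      (((p.2 : ℕ) : ℂ) * (((p.2 : ℕ) : ℂ) - 1)) • bv n ((p.1 : ℕ) : ℤ) ((p.2 : ℤ) - 1))

/-- `H(v_i ⊗ w_k) = (n-2i-2k)·v_i ⊗ w_k`. -/
noncomputable def HM (n : ℕ) : Module.End ℂ (TM n) :=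
  Finsupp.lsum ℂ fun p => LinearMap.toSpanSingleton ℂ (TM n)
    (((n : ℂ) - 2 * ((p.1 : ℕ) : ℂ) - 2 * ((p.2 : ℕ) : ℂ)) • bv n ((p.1 : ℕ) : ℤ) ((p.2 : ℤ)))

/-- With `r = -s-2` and `m = (n+r)/2`, the rational number
`p_i = 4^{m-i} · (n+r+2)/(n+r-2i+2) · ∏_{j=0}^{i-1} (n+r-2j)² · ∏_{ν=i}^{m-1} (n-ν)`,
where an empty product equals `1`. -/
noncomputable def pcoef (n s m i : ℕ) : ℚ :=
  (4 : ℚ) ^ (m - i) *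
    (((n : ℚ) + (-(s : ℚ) - 2) + 2) / ((n : ℚ) + (-(s : ℚ) - 2) - 2 * (i : ℚ) + 2)) *
    (∏ j ∈ Finset.range i, ((n : ℚ) + (-(s : ℚ) - 2) - 2 * (j : ℚ)) ^ 2) *
    (∏ ν ∈ Finset.Ico i m, ((n : ℚ) - (ν : ℚ)))

lemma cf_add (n : ℕ) (u v : TM n) (i k : ℤ) : cf n (u + v) i k = cf n u i k + cf n v i k := by
  unfold cf; split_ifs with h <;> simp

lemma cf_zero (n : ℕ) (i k : ℤ) : cf n (0 : TM n) i k = 0 := by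
  unfold cf; split_ifs with h <;> simp

lemma cf_smul (n : ℕ) (c : ℂ) (u : TM n) (i k : ℤ) : cf n (c • u) i k = c * cf n u i k := by
  unfold cf; split_ifs with h <;> simp

lemma cf_sub (n : ℕ) (u v : TM n) (i k : ℤ) : cf n (u - v) i k = cf n u i k - cf n v i k := by
  unfold cf; split_ifs with h <;> simp

lemma cf_oor (n : ℕ) (u : TM n) (i k : ℤ) (h : ¬ (0 ≤ i ∧ i < (n:ℤ)+1 ∧ 0 ≤ k)) :
    cf n u i k = 0 := by unfold cf; rw [dif_neg h]

lemma cf_bv (n : ℕ) (x y i k : ℤ) :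
    cf n (bv n x y) i k =
      if i = x ∧ k = y ∧ 0 ≤ x ∧ x < (n:ℤ)+1 ∧ 0 ≤ y then 1 else 0 := by
  unfold cf bv
  split_ifs with h1 h2 h3 h3 <;> first
  | rfl
  | (exfalso; omega)
  | · rw [Finsupp.single_apply, if_pos]
      obtain ⟨hi, hk, _⟩ := h3
      simp [Prod.ext_iff, Fin.ext_iff, hi, hk]
  | · rw [Finsupp.single_apply, if_neg]
      intro he
      apply h3
      obtain ⟨he1, he2⟩ := Prod.mk.injEq .. ▸ he
      have : x.toNat = i.toNat := by simpa [Fin.ext_iff] using he1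
      have : y.toNat = k.toNat := by simpa using he2
      omega

lemma cf_ext (n : ℕ) (u v : TM n) (h : ∀ i k : ℤ, cf n u i k = cf n v i k) : u = v := by
  ext q
  obtain ⟨⟨a, ha⟩, b⟩ := q
  have := h a b
  unfold cf at this
  rw [dif_pos, dif_pos] at this
  · simpa using this
  all_goals exact ⟨by positivity, by exact_mod_cast ha, by positivity⟩

lemma cf_apply (n : ℕ) (u : TM n) (a : Fin (n+1)) (b : ℕ) :
    cf n u (a : ℤ) (b : ℤ) = u (a, b) := by
  unfold cf
  rw [dif_pos]
  · congr <;> simp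
  · exact ⟨by positivity, by exact_mod_cast a.2, by positivity⟩

lemma bv_in (n : ℕ) (a b : ℕ) (ha : a < n + 1) :
    bv n a b = Finsupp.single ((⟨a, ha⟩ : Fin (n+1)), b) 1 := by
  unfold bv
  rw [dif_pos ⟨by positivity, by exact_mod_cast ha, by positivity⟩]
  congr <;> simp

lemma single_eq_smul_bv (n : ℕ) (a : ℕ) (ha : a < n + 1) (b : ℕ) (c : ℂ) :
    (Finsupp.single ((⟨a, ha⟩ : Fin (n+1)), b) c : TM n) = c • bv n a b := by
  rw [bv_in n a b ha, Finsupp.smul_single, smul_eq_mul, mul_one]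

lemma FM_bv (n : ℕ) (a b : ℕ) (ha : a < n + 1) :
    FM n (bv n a b) = ((a:ℂ)+1) • bv n ((a:ℤ)+1) (b:ℤ) + bv n (a:ℤ) ((b:ℤ)+1) := by
  rw [bv_in n a b ha]
  unfold FM
  rw [Finsupp.lsum_single, LinearMap.toSpanSingleton_apply, one_smul]

lemma key_scal (i x : ℤ) (P : Prop) [Decidable (i = x ∧ P)] :
    ((x:ℂ)) * (if i = x ∧ P then (1:ℂ) else 0) = (i:ℂ) * (if i = x ∧ P then (1:ℂ) else 0) := by
  split_ifs with h
  · rw [h.1]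
  · ring

lemma FM_apply (n : ℕ) (u : TM n) (i k : ℤ) (hi : i ≤ (n:ℤ)) :
    cf n (FM n u) i k = i * cf n u (i-1) k + cf n u i (k-1) := by
  induction u using Finsupp.induction_linear with
  | zero => simp [cf_zero]
  | add f g hf hg => simp only [map_add, cf_add, hf, hg]; ring
  | single p c =>
    obtain ⟨⟨a, ha⟩, b⟩ := p
    rw [single_eq_smul_bv n a ha b c, map_smul, cf_smul, cf_smul, cf_smul, FM_bv n a b ha,
      cf_add, cf_smul, cf_bv, cf_bv, cf_bv, cf_bv]
    rw [if_congr (show (i = (a:ℤ)+1 ∧ k = (b:ℤ) ∧ 0 ≤ (a:ℤ)+1 ∧ (a:ℤ)+1 < (n:ℤ)+1 ∧ 0 ≤ (b:ℤ)) ↔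
        (i = (a:ℤ)+1 ∧ k = (b:ℤ) ∧ 0 ≤ (a:ℤ) ∧ (a:ℤ) < (n:ℤ)+1 ∧ 0 ≤ (b:ℤ)) by
        constructor <;> (rintro ⟨h1,h2,h3,h4,h5⟩; omega)) rfl rfl,
      if_congr (show (i - 1 = (a:ℤ) ∧ k = (b:ℤ) ∧ 0 ≤ (a:ℤ) ∧ (a:ℤ) < (n:ℤ)+1 ∧ 0 ≤ (b:ℤ)) ↔
        (i = (a:ℤ)+1 ∧ k = (b:ℤ) ∧ 0 ≤ (a:ℤ) ∧ (a:ℤ) < (n:ℤ)+1 ∧ 0 ≤ (b:ℤ)) by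
        constructor <;> (rintro ⟨h1,h2,h3,h4,h5⟩; omega)) rfl rfl,
      if_congr (show (i = (a:ℤ) ∧ k - 1 = (b:ℤ) ∧ 0 ≤ (a:ℤ) ∧ (a:ℤ) < (n:ℤ)+1 ∧ 0 ≤ (b:ℤ)) ↔
        (i = (a:ℤ) ∧ k = (b:ℤ)+1 ∧ 0 ≤ (a:ℤ) ∧ (a:ℤ) < (n:ℤ)+1 ∧ 0 ≤ (b:ℤ)+1) by
        constructor <;> (rintro ⟨h1,h2,h3,h4,h5⟩; omega)) rfl rfl]
    have h1 := key_scal i ((a:ℤ)+1)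
      ((k = (b:ℤ) ∧ 0 ≤ (a:ℤ) ∧ (a:ℤ) < (n:ℤ)+1 ∧ 0 ≤ (b:ℤ)))
    push_cast at h1 ⊢
    rw [h1]
    ring

lemma EM_bv (n : ℕ) (a b : ℕ) (ha : a < n + 1) :
    EM n (bv n a b) = ((n:ℂ)-(a:ℂ)+1) • bv n ((a:ℤ)-1) (b:ℤ)
      - ((b:ℂ)*((b:ℂ)-1)) • bv n (a:ℤ) ((b:ℤ)-1) := by
  conv_lhs => rw [bv_in n a b ha]
  unfold EM
  rw [Finsupp.lsum_single, LinearMap.toSpanSingleton_apply, one_smul]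

lemma HM_bv (n : ℕ) (a b : ℕ) (ha : a < n + 1) :
    HM n (bv n a b) = ((n:ℂ)-2*(a:ℂ)-2*(b:ℂ)) • bv n (a:ℤ) (b:ℤ) := by
  conv_lhs => rw [bv_in n a b ha]
  unfold HM
  rw [Finsupp.lsum_single, LinearMap.toSpanSingleton_apply, one_smul]

lemma HM_apply (n : ℕ) (u : TM n) (i k : ℤ) :
    cf n (HM n u) i k = ((n:ℂ) - 2*(i:ℂ) - 2*(k:ℂ)) * cf n u i k := by
  induction u using Finsupp.induction_linear with
  | zero => simp [cf_zero]
  | add f g hf hg => simp only [map_add, cf_add, hf, hg]; ring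
  | single p c =>
    obtain ⟨⟨a, ha⟩, b⟩ := p
    rw [single_eq_smul_bv n a ha b c, map_smul, cf_smul, cf_smul, HM_bv n a b ha,
      cf_smul, cf_bv]
    split_ifs with h
    · obtain ⟨rfl, rfl, -⟩ := h; push_cast; ring
    · ring

lemma EM_apply (n : ℕ) (u : TM n) (i k : ℤ) (hi : 0 ≤ i) :
    cf n (EM n u) i k = ((n:ℂ) - (i:ℂ)) * cf n u (i+1) k
      - (((k:ℂ)+1)*(k:ℂ)) * cf n u i (k+1) := by
  induction u using Finsupp.induction_linear with
  | zero => simp [cf_zero]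
  | add f g hf hg => simp only [map_add, cf_add, hf, hg]; ring
  | single p c =>
    obtain ⟨⟨a, ha⟩, b⟩ := p
    rw [single_eq_smul_bv n a ha b c, map_smul, cf_smul, cf_smul, cf_smul, EM_bv n a b ha,
      cf_sub, cf_smul, cf_smul, cf_bv, cf_bv, cf_bv, cf_bv]
    have t1 : ((n:ℂ)-(a:ℂ)+1) *
        (if i = (a:ℤ)-1 ∧ k = (b:ℤ) ∧ 0 ≤ (a:ℤ)-1 ∧ (a:ℤ)-1 < (n:ℤ)+1 ∧ 0 ≤ (b:ℤ)
          then (1:ℂ) else 0)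
        = ((n:ℂ)-(i:ℂ)) *
        (if i+1 = (a:ℤ) ∧ k = (b:ℤ) ∧ 0 ≤ (a:ℤ) ∧ (a:ℤ) < (n:ℤ)+1 ∧ 0 ≤ (b:ℤ)
          then (1:ℂ) else 0) := by
      split_ifs with h1 h2 h2
      · have : (a:ℤ) = i + 1 := by omega
        have : (a:ℂ) = (i:ℂ) + 1 := by exact_mod_cast congrArg (fun z : ℤ => (z : ℂ)) this
        rw [this]; ring
      · exfalso; omega
      · exfalso; omega
      · ring
    have t2 : ((b:ℂ)*((b:ℂ)-1)) *
        (if i = (a:ℤ) ∧ k = (b:ℤ)-1 ∧ 0 ≤ (a:ℤ) ∧ (a:ℤ) < (n:ℤ)+1 ∧ 0 ≤ (b:ℤ)-1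
          then (1:ℂ) else 0)
        = (((k:ℂ)+1)*(k:ℂ)) *
        (if i = (a:ℤ) ∧ k+1 = (b:ℤ) ∧ 0 ≤ (a:ℤ) ∧ (a:ℤ) < (n:ℤ)+1 ∧ 0 ≤ (b:ℤ)
          then (1:ℂ) else 0) := by
      split_ifs with h1 h2 h2
      · have hb : (b:ℤ) = k + 1 := by omega
        have : (b:ℂ) = (k:ℂ) + 1 := by exact_mod_cast congrArg (fun z : ℤ => (z : ℂ)) hb
        rw [this]; ring
      · exfalso; omega
      · have hb : b = 0 := by omega
        have hk : k = -1 := by omega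
        subst hb hk
        norm_num
      · ring
    rw [t1, t2]
    ring

lemma HF_comm (n : ℕ) (u : TM n) :
    HM n (FM n u) = FM n (HM n u) - (2:ℂ) • FM n u := by
  apply cf_ext
  intro i k
  by_cases h : 0 ≤ i ∧ i < (n:ℤ)+1 ∧ 0 ≤ k
  · rw [HM_apply, FM_apply n u i k (by omega), cf_sub, cf_smul,
      FM_apply n (HM n u) i k (by omega), FM_apply n u i k (by omega),
      HM_apply, HM_apply]
    push_cast
    ring
  · rw [cf_oor n _ i k h, cf_sub, cf_oor n _ i k h, cf_oor n _ i k h]; ring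

lemma EF_comm (n : ℕ) (u : TM n) :
    EM n (FM n u) = FM n (EM n u) + HM n u := by
  apply cf_ext
  intro i k
  by_cases h : 0 ≤ i ∧ i < (n:ℤ)+1 ∧ 0 ≤ k
  · have hD : ((n:ℂ)-(i:ℂ)) * cf n (FM n u) (i+1) k
        = ((n:ℂ)-(i:ℂ)) * ((i+1) * cf n u i k + cf n u (i+1) (k-1)) := by
      by_cases hin : i = (n:ℤ)
      · subst hin; push_cast; ring
      · rw [FM_apply n u (i+1) k (by omega)]
        rw [show (i+1-1 : ℤ) = i by ring]
        push_cast; ring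
    have hE : (i:ℂ) * cf n (EM n u) (i-1) k
        = (i:ℂ) * (((n:ℂ)-(i:ℂ)+1) * cf n u i k
            - (((k:ℂ))+1)*(k:ℂ) * cf n u (i-1) (k+1)) := by
      by_cases hi0 : i = 0
      · subst hi0; push_cast; ring
      · rw [EM_apply n u (i-1) k (by omega)]
        rw [show (i-1+1 : ℤ) = i by ring]
        push_cast; ring
    rw [EM_apply n (FM n u) i k (by omega), cf_add,
      FM_apply n (EM n u) i k (by omega), HM_apply,
      FM_apply n u i (k+1) (by omega),
      EM_apply n u i (k-1) (by omega),
      hD, hE,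
      show (k+1-1 : ℤ) = k by ring, show (k-1+1 : ℤ) = k by ring]
    push_cast
    ring
  · rw [cf_oor n _ i k h, cf_add, cf_oor n _ i k h, cf_oor n _ i k h]; ring

lemma H_pow (n : ℕ) (u : TM n) (c : ℂ) (h : HM n u = c • u) (t : ℕ) :
    HM n ((FM n ^ t) u) = (c - 2*(t:ℂ)) • ((FM n ^ t) u) := by
  induction t with
  | zero => simpa using h
  | succ t ih =>
    rw [pow_succ', Module.End.mul_apply, HF_comm, ih, map_smul]
    rw [← sub_smul]
    congr 1
    push_cast
    ring

lemma E_pow (n : ℕ) (u : TM n) (s : ℕ) (hE : EM n u = 0) (hH : HM n u = (s:ℂ) • u) (t : ℕ) :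
    EM n ((FM n ^ (t+1)) u) = (((t:ℂ)+1)*((s:ℂ)-(t:ℂ))) • ((FM n ^ t) u) := by
  induction t with
  | zero =>
    rw [pow_one, EF_comm, hE, hH, map_zero, zero_add, pow_zero, Module.End.one_apply]
    congr 1; ring
  | succ t ih =>
    rw [pow_succ', Module.End.mul_apply, EF_comm, ih, map_smul, H_pow n u (s:ℂ) hH (t+1),
      ← Module.End.mul_apply, ← pow_succ']
    rw [← add_smul]
    congr 1
    push_cast
    ring

def Ncoef (n m i : ℕ) : ℕ :=
  4 ^ m * Nat.descFactorial (m+1) i * Nat.descFactorial m i * ∏ ν ∈ Finset.Ico i m, (n - ν)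

lemma prod_lin_cast (m i : ℕ) (hi : i ≤ m) :
    ∏ j ∈ Finset.range i, (2*(m:ℚ) - 2*(j:ℚ)) = 2^i * (Nat.descFactorial m i : ℚ) := by
  induction i with
  | zero => simp
  | succ i ih =>
    rw [Finset.prod_range_succ, ih (by omega), Nat.descFactorial_succ,
      Nat.cast_mul, Nat.cast_sub (by omega)]
    push_cast
    ring

lemma pcoef_eq (n s m i : ℕ) (hm : n = s + 2 + 2*m) (hi : i ≤ m) :
    pcoef n s m i = (Ncoef n m i : ℚ) := by
  unfold pcoef Ncoef
  have h1 : (n:ℚ) + (-(s:ℚ)-2) = 2*(m:ℚ) := by subst hm; push_cast; ring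
  rw [h1]
  have h2 : ∀ j : ℕ, (2*(m:ℚ) - 2*(j:ℚ))^2 = (2*(m:ℚ) - 2*(j:ℚ))^2 := fun _ => rfl
  rw [Finset.prod_pow, prod_lin_cast m i hi]
  have h3 : ∏ ν ∈ Finset.Ico i m, ((n:ℚ) - (ν:ℚ))
      = ((∏ ν ∈ Finset.Ico i m, (n - ν) : ℕ) : ℚ) := by
    rw [Nat.cast_prod]
    apply Finset.prod_congr rfl
    intro ν hν
    rw [Finset.mem_Ico] at hν
    rw [Nat.cast_sub (by omega)]
  rw [h3]
  push_cast
  set d : ℚ := (Nat.descFactorial m i : ℚ) with hd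
  set e : ℚ := (Nat.descFactorial (m+1) i : ℚ) with he
  set P : ℚ := ∏ ν ∈ Finset.Ico i m, ((n - ν : ℕ) : ℚ) with hP
  have hrel : e * ((m:ℚ) - i + 1) = ((m:ℚ)+1) * d := by
    have : Nat.descFactorial (m+1) i * (m+1-i) = (m+1) * Nat.descFactorial m i := by
      rw [mul_comm, ← Nat.descFactorial_succ, Nat.succ_descFactorial_succ]
    have h4 := congrArg (Nat.cast : ℕ → ℚ) this
    push_cast [Nat.cast_sub (show i ≤ m+1 by omega)] at h4
    rw [hd, he]
    linear_combination h4
  have hne : 2*(m:ℚ) - 2*i + 2 ≠ 0 := by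
    have : (i:ℚ) ≤ (m:ℚ) := by exact_mod_cast hi
    nlinarith
  have h4 : (4:ℚ)^(m-i) * 4^i = 4^m := by
    rw [← pow_add]; congr 1; omega
  have h2i : ((2:ℚ)^(i*2)) = 4^i := by
    rw [pow_mul']
    norm_num
  have hne' : (1 + (m:ℚ) - i) ≠ 0 := by intro h; apply hne; linear_combination 2*h
  have hne'' : ((m:ℚ) - i + 1) ≠ 0 := by intro h; apply hne; linear_combination 2*h
  field_simp
  linear_combination (((m:ℚ)+1)*(4:ℚ)^(m-i)*d^2*P) * h2i
    + (((m:ℚ)+1)*d^2*P) * h4 - ((4:ℚ)^m*d*P) * hrel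

lemma Ncoef_rec (n m j : ℕ) (hj : j < m) :
    Ncoef n m (j+1) * (n - j) = Ncoef n m j * ((m+1-j) * (m-j)) := by
  unfold Ncoef
  rw [Nat.descFactorial_succ (m+1) j, Nat.descFactorial_succ m j,
    Finset.prod_eq_prod_Ico_succ_bot hj (fun ν => n - ν)]
  ring

lemma Ncoef_zero_pos (n m : ℕ) (hmn : m < n) : 0 < Ncoef n m 0 := by
  unfold Ncoef
  simp only [Nat.descFactorial_zero]
  have : 0 < ∏ ν ∈ Finset.Ico 0 m, (n - ν) := by
    apply Finset.prod_pos
    intro ν hν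
    rw [Finset.mem_Ico] at hν
    omega
  positivity

lemma cf_sum (n : ℕ) {α : Type*} (s : Finset α) (f : α → TM n) (i k : ℤ) :
    cf n (∑ j ∈ s, f j) i k = ∑ j ∈ s, cf n (f j) i k := by
  classical
  induction s using Finset.induction_on with
  | empty => simp [cf_zero]
  | insert _ _ hx ih =>
    rw [Finset.sum_insert hx, Finset.sum_insert hx, cf_add, ih]

lemma cf_us (n m : ℕ) (hmn : m < n) (N : ℕ → ℕ) (i k : ℤ) :
    cf n (∑ j ∈ Finset.range (m+1), ((N j : ℂ)) • bv n (j:ℤ) ((m:ℤ)+1-(j:ℤ))) i k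
      = if 0 ≤ i ∧ i ≤ (m:ℤ) ∧ i + k = (m:ℤ)+1 then (N i.toNat : ℂ) else 0 := by
  rw [cf_sum]
  have hterm : ∀ j ∈ Finset.range (m+1),
      cf n (((N j : ℂ)) • bv n (j:ℤ) ((m:ℤ)+1-(j:ℤ))) i k
        = if i = (j:ℤ) ∧ k = (m:ℤ)+1-(j:ℤ) then (N j : ℂ) else 0 := by
    intro j hj
    rw [Finset.mem_range] at hj
    rw [cf_smul, cf_bv, mul_ite, mul_one, mul_zero]
    congr 1
    simp only [eq_iff_iff]
    constructor
    · rintro ⟨h1, h2, -⟩; exact ⟨h1, h2⟩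
    · rintro ⟨h1, h2⟩; refine ⟨h1, h2, by omega, by omega, by omega⟩
  rw [Finset.sum_congr rfl hterm]
  by_cases hc : 0 ≤ i ∧ i ≤ (m:ℤ) ∧ i + k = (m:ℤ)+1
  · rw [if_pos hc]
    rw [Finset.sum_eq_single i.toNat]
    · rw [if_pos (by omega)]
    · intro b hb hne
      rw [if_neg (by omega)]
    · intro hmem
      exfalso
      rw [Finset.mem_range] at hmem
      omega
  · rw [if_neg hc]
    apply Finset.sum_eq_zero
    intro j hj
    rw [Finset.mem_range] at hj
    rw [if_neg (by omega)]

lemma HM_us (n s m : ℕ) (hm : n = s + 2 + 2 * m) :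
    HM n (∑ j ∈ Finset.range (m+1), ((Ncoef n m j : ℂ)) • bv n (j:ℤ) ((m:ℤ)+1-(j:ℤ)))
      = (s:ℂ) • (∑ j ∈ Finset.range (m+1), ((Ncoef n m j : ℂ)) • bv n (j:ℤ) ((m:ℤ)+1-(j:ℤ))) := by
  have hmn : m < n := by omega
  apply cf_ext
  intro i k
  rw [HM_apply, cf_smul, cf_us n m hmn _ i k]
  by_cases hc : 0 ≤ i ∧ i ≤ (m:ℤ) ∧ i + k = (m:ℤ)+1
  · rw [if_pos hc]
    have hik : (i:ℂ) + (k:ℂ) = (m:ℂ) + 1 := by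
      exact_mod_cast congrArg (fun z : ℤ => (z:ℂ)) hc.2.2
    have hns : (n:ℂ) = (s:ℂ) + 2 + 2*(m:ℂ) := by exact_mod_cast congrArg (Nat.cast : ℕ → ℂ) hm
    rw [hns]
    linear_combination (-2*(Ncoef n m i.toNat : ℂ)) * hik
  · rw [if_neg hc]; ring

lemma EM_us (n s m : ℕ) (hm : n = s + 2 + 2 * m) :
    EM n (∑ j ∈ Finset.range (m+1), ((Ncoef n m j : ℂ)) • bv n (j:ℤ) ((m:ℤ)+1-(j:ℤ))) = 0 := by
  have hmn : m < n := by omega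
  apply cf_ext
  intro i k
  rw [cf_zero]
  by_cases h : 0 ≤ i ∧ i < (n:ℤ)+1 ∧ 0 ≤ k
  · rw [EM_apply n _ i k h.1, cf_us n m hmn _ (i+1) k, cf_us n m hmn _ i (k+1)]
    by_cases hA : i + k = (m:ℤ) ∧ i ≤ (m:ℤ)
    · by_cases hB : i = (m:ℤ)
      · rw [if_neg (by omega), if_pos (by omega)]
        obtain rfl : k = 0 := by omega
        norm_num
      · rw [if_pos (by omega), if_pos (by omega)]
        obtain ⟨a, rfl⟩ : ∃ a : ℕ, i = (a:ℤ) := ⟨i.toNat, by omega⟩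
        obtain rfl : k = (m:ℤ) - (a:ℤ) := by omega
        have ha : ((a:ℤ)+1).toNat = a + 1 := by omega
        have ha2 : ((a:ℤ)).toNat = a := by omega
        rw [ha, ha2]
        have hrec := congrArg (Nat.cast : ℕ → ℂ) (Ncoef_rec n m a (by omega))
        push_cast [Nat.cast_sub (show a ≤ n by omega), Nat.cast_sub (show a ≤ m by omega),
          Nat.cast_sub (show a ≤ m+1 by omega)] at hrec ⊢
        linear_combination hrec
    · rw [if_neg (by omega), if_neg (by omega)]
      ring
  · rw [cf_oor n _ i k h]

/-- Fix `n ≥ 2`, `0 ≤ s ≤ n-2` with `n - s` even, `r = -s-2`, `m = (n+r)/2`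
(encoded by `n = s + 2 + 2m`), and let
`u_s = Σ_{j=0}^{m} p_j · (v_j ⊗ w_{m+1-j})` be the highest weight vector of
weight `s` in the tensor product model `M` of `L_n ⊗ V_0`.  Then
`u_{-s-2} = F^{s+1}(u_s)` is nonzero, satisfies `H(u_{-s-2}) = (-s-2)·u_{-s-2}`
and `E(u_{-s-2}) = 0`, and all of its coefficients in the basis `{v_i ⊗ w_k}`
are nonnegative integers, supported on pairs `(i,k)` with
`i + k = (n+s+2)/2`. -/
theorem stmt16 (n s m : ℕ) (hn : 2 ≤ n) (hm : n = s + 2 + 2 * m) :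
    let us : TM n := ∑ j ∈ Finset.range (m + 1),
      ((pcoef n s m j : ℂ)) • bv n (j : ℤ) ((m : ℤ) + 1 - (j : ℤ));
    let ums : TM n := (FM n ^ (s + 1)) us;
    ums ≠ 0 ∧
    HM n ums = (-(s : ℂ) - 2) • ums ∧
    EM n ums = 0 ∧
    (∀ p : Fin (n + 1) × ℕ, ∃ N : ℕ, ums p = (N : ℂ)) ∧
    (∀ (i : Fin (n + 1)) (k : ℕ), ums (i, k) ≠ 0 → (i : ℕ) + k = (n + s + 2) / 2) := by
  intro us ums
  have hmn : m < n := by omega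
  have husN : us = ∑ j ∈ Finset.range (m+1),
      ((Ncoef n m j : ℂ)) • bv n (j:ℤ) ((m:ℤ)+1-(j:ℤ)) := by
    apply Finset.sum_congr rfl
    intro j hj
    rw [Finset.mem_range] at hj
    congr 1
    rw [pcoef_eq n s m j hm (by omega)]
    push_cast
    rfl
  have hHus : HM n us = (s:ℂ) • us := by rw [husN]; exact HM_us n s m hm
  have hEus : EM n us = 0 := by rw [husN]; exact EM_us n s m hm
  -- coefficients of F^t us
  have hcf : ∀ t : ℕ, ∀ i k : ℤ, ∃ N : ℕ, cf n ((FM n ^ t) us) i k = (N : ℂ) := by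
    intro t
    induction t with
    | zero =>
      intro i k
      rw [pow_zero, Module.End.one_apply, husN, cf_us n m hmn _ i k]
      by_cases hc : 0 ≤ i ∧ i ≤ (m:ℤ) ∧ i + k = (m:ℤ)+1
      · exact ⟨Ncoef n m i.toNat, by rw [if_pos hc]⟩
      · exact ⟨0, by rw [if_neg hc]; norm_num⟩
    | succ t ih =>
      intro i k
      by_cases h : 0 ≤ i ∧ i < (n:ℤ)+1 ∧ 0 ≤ k
      · rw [pow_succ', Module.End.mul_apply, FM_apply n _ i k (by omega)]
        obtain ⟨N1, h1⟩ := ih (i-1) k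
        obtain ⟨N2, h2⟩ := ih i (k-1)
        refine ⟨i.toNat * N1 + N2, ?_⟩
        rw [h1, h2]
        have : (i:ℂ) = (i.toNat : ℂ) := by
          have : (i.toNat : ℤ) = i := by omega
          exact_mod_cast (congrArg (fun z : ℤ => (z:ℂ)) this).symm
        rw [this]
        push_cast
        ring
      · exact ⟨0, by rw [cf_oor n _ i k h]; norm_num⟩
  -- support of F^t us
  have hsupp : ∀ t : ℕ, ∀ i k : ℤ, cf n ((FM n ^ t) us) i k ≠ 0 → i + k = (m:ℤ)+1+(t:ℤ) := by
    intro t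
    induction t with
    | zero =>
      intro i k hne
      rw [pow_zero, Module.End.one_apply, husN, cf_us n m hmn _ i k] at hne
      by_cases hc : 0 ≤ i ∧ i ≤ (m:ℤ) ∧ i + k = (m:ℤ)+1
      · push_cast; omega
      · rw [if_neg hc] at hne; exact absurd rfl hne
    | succ t ih =>
      intro i k hne
      by_cases h : 0 ≤ i ∧ i < (n:ℤ)+1 ∧ 0 ≤ k
      · rw [pow_succ', Module.End.mul_apply, FM_apply n _ i k (by omega)] at hne
        by_cases h1 : cf n ((FM n ^ t) us) (i-1) k = 0
        · by_cases h2 : cf n ((FM n ^ t) us) i (k-1) = 0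
          · rw [h1, h2] at hne; norm_num at hne
          · have := ih i (k-1) h2; push_cast at this ⊢; omega
        · have := ih (i-1) k h1; push_cast at this ⊢; omega
      · rw [cf_oor n _ i k h] at hne; exact absurd rfl hne
  -- value at (0, m+1+t)
  have hval : ∀ t : ℕ, cf n ((FM n ^ t) us) 0 ((m:ℤ)+1+(t:ℤ)) = (Ncoef n m 0 : ℂ) := by
    intro t
    induction t with
    | zero =>
      rw [pow_zero, Module.End.one_apply, husN]
      rw [show ((m:ℤ)+1+((0:ℕ):ℤ)) = (m:ℤ)+1 by push_cast; ring]
      rw [cf_us n m hmn _ 0 ((m:ℤ)+1), if_pos (by omega)]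
      norm_num
    | succ t ih =>
      rw [pow_succ', Module.End.mul_apply, FM_apply n _ 0 _ (by omega)]
      rw [show ((m:ℤ)+1+((t+1:ℕ):ℤ)-1) = (m:ℤ)+1+(t:ℤ) by push_cast; ring, ih]
      simp
  have hums : ums = (FM n ^ (s+1)) us := rfl
  refine ⟨?_, ?_, ?_, ?_, ?_⟩
  · -- nonzero
    intro h0
    have h1 := hval (s+1)
    rw [hums] at h0
    rw [h0, cf_zero] at h1
    have hpos := Ncoef_zero_pos n m hmn
    have h2 : Ncoef n m 0 = 0 := by exact_mod_cast h1.symm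
    omega
  · -- H eigen
    show HM n ((FM n ^ (s+1)) us) = (-(s:ℂ) - 2) • ((FM n ^ (s+1)) us)
    rw [H_pow n us ((s:ℂ)) hHus (s+1)]
    congr 1
    push_cast
    ring
  · -- E kills
    show EM n ((FM n ^ (s+1)) us) = 0
    rw [E_pow n us s hEus hHus s]
    simp
  · -- nat coefficients
    intro p
    obtain ⟨a, b⟩ := p
    obtain ⟨N, hN⟩ := hcf (s+1) (a:ℤ) (b:ℤ)
    exact ⟨N, by rw [← cf_apply n _ a b]; exact hN⟩
  · -- support
    intro i k hne
    have : cf n ums (i:ℤ) (k:ℤ) ≠ 0 := by rw [cf_apply]; exact hne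
    have h2 := hsupp (s+1) (i:ℤ) (k:ℤ) this
    have : (i:ℕ) + k = m + 1 + (s+1) := by push_cast at h2; omega
    omega
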